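/- Let M be a matroid on a finite linearly ordered ground set E. For all natural numbers i and e, the number of bases of M with internal activity i and external activity e equals the sum, over all cyclic flats F of M, of the product (number of bases of M/F with internal activity i and external activity 0) × (number of bases of M(F) with internal activity 0 and external activity e). Moreover, the same sum taken over all subsets F of E gives the same value, since every term corresponding to a subset F that is not a cyclic flat is zero. -/

import Mathlib

open Matroid Set

namespace ActiveBij

variable {α : Type*}

/-- Deletion of a set of elements from a matroid. -/
def del (M : Matroid α) (D : Set α) : Matroid α := M ↾ (M.E \ D)

/-- Contraction of a set of elements of a matroid. -/
def con (M : Matroid α) (C : Set α) : Matroid α := (del M✶ C)✶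

/-- The minor `M(G)/F` : restriction to `G` followed by contraction of `F`. -/
def minor (M : Matroid α) (G F : Set α) : Matroid α := con (M ↾ G) F

/-- A circuit of a matroid : a minimal dependent set. -/
def Cct (M : Matroid α) (C : Set α) : Prop := Minimal M.Dep C

/-- A cocircuit of a matroid : a circuit of the dual. -/
def Cocct (M : Matroid α) (C : Set α) : Prop := Cct M✶ C

/-- The fundamental circuit of `e ∉ B` with respect to a base `B` :
the unique circuit contained in `B ∪ {e}`. -/
def fundCct (M : Matroid α) (B : Set α) (e : α) : Set α :=
  ⋂₀ {C | Cct M C ∧ C ⊆ insert e B}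

/-- The fundamental cocircuit of `b ∈ B` with respect to a base `B` :
the unique cocircuit contained in `(E \ B) ∪ {b}`. -/
def fundCocct (M : Matroid α) (B : Set α) (b : α) : Set α :=
  ⋂₀ {C | Cocct M C ∧ C ⊆ insert b (M.E \ B)}

/-- The set of internally active elements of a base `B` :
elements `b ∈ B` that are the minimum of their fundamental cocircuit. -/
def ActInt [LinearOrder α] (M : Matroid α) (B : Set α) : Set α :=
  {b ∈ B | IsLeast (fundCocct M B b) b}

/-- The set of externally active elements of a base `B` :
elements `e ∈ M.E \ B` that are the minimum of their fundamental circuit. -/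
def ActExt [LinearOrder α] (M : Matroid α) (B : Set α) : Set α :=
  {e ∈ M.E \ B | IsLeast (fundCct M B e) e}

/-- A uniactive internal base : internal activity `1` and external activity `0`. -/
def UIntBase [LinearOrder α] (M : Matroid α) (B : Set α) : Prop :=
  M.IsBase B ∧ (ActInt M B).ncard = 1 ∧ (ActExt M B).ncard = 0

/-- A uniactive external base : internal activity `0` and external activity `1`. -/
def UExtBase [LinearOrder α] (M : Matroid α) (B : Set α) : Prop :=
  M.IsBase B ∧ (ActInt M B).ncard = 0 ∧ (ActExt M B).ncard = 1

/-- `β(M)` : the number of uniactive internal bases. -/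
noncomputable def beta [LinearOrder α] (M : Matroid α) : ℕ :=
  {B : Set α | UIntBase M B}.ncard

/-- `β*(M)` : the number of uniactive external bases. -/
noncomputable def betaStar [LinearOrder α] (M : Matroid α) : ℕ :=
  {B : Set α | UExtBase M B}.ncard

/-- A connected matroid : any two elements of the ground set lie on a common circuit. -/
def Conn (M : Matroid α) : Prop :=
  M.E.Nonempty ∧ ∀ ⦃x y⦄, x ∈ M.E → y ∈ M.E →
    (x = y ∨ ∃ C, Cct M C ∧ x ∈ C ∧ y ∈ C)

/-- A matroid consisting of a single loop. -/
def IsLoopMatroid (M : Matroid α) : Prop := ∃ e, M.E = {e} ∧ M.Dep {e}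

/-- A matroid consisting of a single coloop (isthmus). -/
def IsColoopMatroid (M : Matroid α) : Prop := ∃ e, M.E = {e} ∧ M.Indep {e}

/-- A flat : a subset of the ground set whose complement is a union of cocircuits. -/
def IsFlat (M : Matroid α) (F : Set α) : Prop :=
  F ⊆ M.E ∧ ∃ S : Set (Set α), (∀ C ∈ S, Cocct M C) ∧ M.E \ F = ⋃₀ S

/-- A dual-flat : a union of circuits. -/
def IsDualFlat (M : Matroid α) (F : Set α) : Prop :=
  ∃ S : Set (Set α), (∀ C ∈ S, Cct M C) ∧ F = ⋃₀ S

/-- A cyclic flat : both a flat and a dual-flat. -/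
def IsCyclicFlat (M : Matroid α) (F : Set α) : Prop :=
  IsFlat M F ∧ IsDualFlat M F

/-- The data of a filtration : `∅ = F'_ε ⊂ ⋯ ⊂ F'_0 = F_c = F_0 ⊂ ⋯ ⊂ F_ι = E`. -/
structure Filtration (α : Type*) where
  ι : ℕ
  ε : ℕ
  F : Fin (ι + 1) → Set α
  F' : Fin (ε + 1) → Set α

/-- The `k`-th internal minor `M(F_k)/F_{k-1}` induced by a filtration. -/
def intMinor (M : Matroid α) (f : Filtration α) (k : Fin f.ι) : Matroid α :=
  minor M (f.F k.succ) (f.F k.castSucc)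

/-- The `k`-th external minor `M(F'_{k-1})/F'_k` induced by a filtration. -/
def extMinor (M : Matroid α) (f : Filtration α) (k : Fin f.ε) : Matroid α :=
  minor M (f.F' k.castSucc) (f.F' k.succ)

/-- The filtration property : strictly nested subsets from `∅` to `M.E` through `F_c`,
with the minima of the successive differences increasing on each side of `F_c`. -/
def IsFiltration [LinearOrder α] (M : Matroid α) (f : Filtration α) : Prop :=
  f.F' (Fin.last f.ε) = ∅ ∧
  f.F' 0 = f.F 0 ∧
  f.F (Fin.last f.ι) = M.E ∧
  (∀ k : Fin f.ι, f.F k.castSucc ⊂ f.F k.succ) ∧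
  (∀ k : Fin f.ε, f.F' k.succ ⊂ f.F' k.castSucc) ∧
  (∀ j k : Fin f.ι, j < k → ∀ a b : α,
    IsLeast (f.F j.succ \ f.F j.castSucc) a →
    IsLeast (f.F k.succ \ f.F k.castSucc) b → a < b) ∧
  (∀ j k : Fin f.ε, j < k → ∀ a b : α,
    IsLeast (f.F' j.castSucc \ f.F' j.succ) a →
    IsLeast (f.F' k.castSucc \ f.F' k.succ) b → a < b)

/-- A connected filtration : a filtration all of whose induced internal minors are
connected and not single loops, and all of whose induced external minors are connected
and not single coloops. -/
def IsConnFiltration [LinearOrder α] (M : Matroid α) (f : Filtration α) : Prop :=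
  IsFiltration M f ∧
  (∀ k : Fin f.ι, Conn (intMinor M f k) ∧ ¬ IsLoopMatroid (intMinor M f k)) ∧
  (∀ k : Fin f.ε, Conn (extMinor M f k) ∧ ¬ IsColoopMatroid (extMinor M f k))

/-- An active filtration of a base `B` : a filtration such that `B` induces a uniactive
internal base of each internal minor and a uniactive external base of each external minor. -/
def IsActiveFiltration [LinearOrder α] (M : Matroid α) (B : Set α) (f : Filtration α) : Prop :=
  IsFiltration M f ∧
  (∀ k : Fin f.ι, UIntBase (intMinor M f k) (B ∩ (f.F k.succ \ f.F k.castSucc))) ∧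
  (∀ k : Fin f.ε, UExtBase (extMinor M f k) (B ∩ (f.F' k.castSucc \ f.F' k.succ)))

/-- The subset `F(X)` attached to a base `B` and a set `X` of internally active elements :
`B ∩ F` is a base of `M(F)`, the activities of the induced bases of `M(F)` and `M/F`
split those of `B`, with `Int` of the contraction part equal to `X`. -/
def DecompSet [LinearOrder α] (M : Matroid α) (B X F : Set α) : Prop :=
  F ⊆ M.E ∧
  (M ↾ F).IsBase (B ∩ F) ∧
  ActInt (M ↾ F) (B ∩ F) = ActInt M B \ X ∧
  ActExt (M ↾ F) (B ∩ F) = ActExt M B ∧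
  ActInt (con M F) (B \ F) = X ∧
  ActExt (con M F) (B \ F) = ∅

/-- The dual of a filtration : complement every subset and exchange the two sides. -/
def dualFil (M : Matroid α) (f : Filtration α) : Filtration α :=
  ⟨f.ε, f.ι, fun k => M.E \ f.F' k, fun k => M.E \ f.F k⟩

/-- The set of subsets occurring in a filtration. -/
def termsOf (f : Filtration α) : Set (Set α) :=
  {H | ∃ k, f.F k = H} ∪ {H | ∃ k, f.F' k = H}

end ActiveBij

namespace ActiveBij
section Phase1

variable {α : Type*} {M : Matroid α} {B C D I J R A F X : Set α} {e g x y : α}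

@[simp] lemma del_ground (M : Matroid α) (D : Set α) : (del M D).E = M.E \ D := rfl

lemma con_dual (M : Matroid α) (C : Set α) : (con M C)✶ = del M✶ C := by
  rw [con, Matroid.dual_dual]

lemma del_dual (M : Matroid α) (D : Set α) : (del M D)✶ = con M✶ D := by
  rw [con, Matroid.dual_dual]

@[simp] lemma con_ground (M : Matroid α) (C : Set α) : (con M C).E = M.E \ C := by
  rw [con, Matroid.dual_ground, del_ground, Matroid.dual_ground]

instance del_finite [M.Finite] {D : Set α} : (del M D).Finite :=
  Matroid.restrict_finite (M.ground_finite.diff)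

instance con_finite [M.Finite] {C : Set α} : (con M C).Finite := by
  rw [con]; infer_instance

lemma Cct.dep (h : Cct M C) : M.Dep C := h.1

lemma Cct.subset_ground (h : Cct M C) : C ⊆ M.E := h.1.subset_ground

lemma Cct.subset_of_dep_subset (h : Cct M C) (hD : M.Dep D) (hDC : D ⊆ C) : C ⊆ D :=
  h.2 hD hDC

lemma Cct.diff_singleton_indep (h : Cct M C) (he : e ∈ C) : M.Indep (C \ {e}) := by
  by_contra hd
  have hdep : M.Dep (C \ {e}) :=
    Matroid.dep_of_not_indep hd ((Set.diff_subset).trans h.subset_ground)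
  have := h.subset_of_dep_subset hdep Set.diff_subset he
  simp at this

lemma Cct.mem_closure (h : Cct M C) (he : e ∈ C) : e ∈ M.closure (C \ {e}) := by
  have hi := h.diff_singleton_indep he
  have hd : M.Dep (insert e (C \ {e})) := by
    rw [Set.insert_diff_singleton, Set.insert_eq_of_mem he]
    exact h.dep
  exact (hi.insert_dep_iff.mp hd).1

lemma exists_cct_of_dep_aux (n : ℕ) :
    ∀ D : Set α, D.ncard ≤ n → M.Dep D → D.Finite → ∃ C, Cct M C ∧ C ⊆ D := by
  induction n with
  | zero =>
    intro D hn hD hfin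
    rw [Nat.le_zero, Set.ncard_eq_zero hfin] at hn
    exact absurd (hn ▸ hD.nonempty) (by simp)
  | succ n ih =>
    intro D hn hD hfin
    by_cases hm : Minimal M.Dep D
    · exact ⟨D, hm, subset_rfl⟩
    · rw [Minimal] at hm
      push_neg at hm
      obtain ⟨D', hD', hsub, hnsub⟩ := hm hD
      have hss : D' ⊂ D := ⟨hsub, hnsub⟩
      have : D'.ncard ≤ n := by
        have := Set.ncard_lt_ncard hss hfin
        omega
      obtain ⟨C, hC, hCD⟩ := ih D' this hD' (hfin.subset hsub)
      exact ⟨C, hC, hCD.trans hsub⟩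

lemma exists_cct_of_dep (hD : M.Dep D) (hfin : D.Finite) : ∃ C, Cct M C ∧ C ⊆ D :=
  exists_cct_of_dep_aux D.ncard D le_rfl hD hfin

lemma Cct.mem_of_subset_insert (h : Cct M C) (hB : M.Indep B) (hC : C ⊆ insert e B) :
    e ∈ C := by
  by_contra he
  have : C ⊆ B := by
    intro x hx
    rcases hC hx with rfl | hxB
    · exact absurd hx he
    · exact hxB
  exact h.dep.not_indep (hB.subset this)

lemma cct_unique (hB : M.Indep B) (hfin : (C₁ ∪ C₂ : Set α).Finite)
    (h₁ : Cct M C₁) (h₁s : C₁ ⊆ insert e B) (h₂ : Cct M C₂) (h₂s : C₂ ⊆ insert e B) :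
    C₁ = C₂ := by
  by_contra hne
  have he₁ : e ∈ C₁ := h₁.mem_of_subset_insert hB h₁s
  have he₂ : e ∈ C₂ := h₂.mem_of_subset_insert hB h₂s
  -- wlog there is x ∈ C₁ \ C₂
  have hx : ∃ x, x ∈ C₁ ∧ x ∉ C₂ := by
    by_contra h
    push_neg at h
    have hsub : C₁ ⊆ C₂ := h
    exact hne (hsub.antisymm (h₂.subset_of_dep_subset h₁.dep hsub))
  obtain ⟨x, hx₁, hx₂⟩ := hx
  have hxe : x ≠ e := fun h => hx₂ (h ▸ he₂)
  set U := C₁ ∪ C₂ with hU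
  have hUE : U ⊆ M.E := Set.union_subset h₁.subset_ground h₂.subset_ground
  have hJB : U \ {e} ⊆ B := by
    intro z hz
    rcases (Set.union_subset h₁s h₂s) hz.1 with rfl | hzB
    · exact absurd rfl hz.2
    · exact hzB
  have hJi : M.Indep (U \ {e}) := hB.subset hJB
  have hJbasis : M.IsBasis (U \ {e}) U := by
    rw [Matroid.isBasis_iff_indep_subset_closure]
    refine ⟨hJi, Set.diff_subset, fun z hz => ?_⟩
    by_cases hze : z = e
    · subst hze
      exact (M.closure_subset_closure (Set.diff_subset_diff_left Set.subset_union_right))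
        (h₂.mem_closure he₂)
    · exact M.subset_closure _ (hJi.subset_ground) ⟨hz, hze⟩
  obtain ⟨I, hIbasis, hI₁⟩ :=
    (h₁.diff_singleton_indep hx₁).subset_isBasis_of_subset
      ((Set.diff_subset).trans Set.subset_union_left) hUE
  have hxI : x ∉ I := by
    intro hxI
    have : C₁ ⊆ I := by
      intro z hz
      by_cases hzx : z = x
      · exact hzx ▸ hxI
      · exact hI₁ ⟨hz, hzx⟩
    exact h₁.dep.not_indep (hIbasis.indep.subset this)
  have hIsub : I ⊆ U \ {x} := fun z hz => ⟨hIbasis.subset hz, fun h => hxI (h ▸ hz)⟩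
  have hcard : (U \ {x}).encard = I.encard := by
    rw [hIbasis.encard_eq_encard hJbasis,
      Set.encard_diff_singleton_of_mem (Set.mem_union_left _ hx₁),
      Set.encard_diff_singleton_of_mem (Set.mem_union_left _ he₁)]
  have hIeq : I = U \ {x} :=
    (hfin.diff).eq_of_subset_of_encard_le' hIsub hcard.le
  have hC₂I : C₂ ⊆ I := by
    rw [hIeq]
    exact fun z hz => ⟨Set.mem_union_right _ hz, fun h => hx₂ (h ▸ hz)⟩
  exact h₂.dep.not_indep (hIbasis.indep.subset hC₂I)

lemma fundCct_spec (hB : M.Indep B) (hd : M.Dep (insert e B)) (hfin : (insert e B).Finite) :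
    Cct M (fundCct M B e) ∧ fundCct M B e ⊆ insert e B ∧ e ∈ fundCct M B e ∧
      ∀ C, Cct M C → C ⊆ insert e B → C = fundCct M B e := by
  obtain ⟨C₀, hC₀, hC₀s⟩ := exists_cct_of_dep hd hfin
  have huniq : ∀ C, Cct M C → C ⊆ insert e B → C = C₀ := fun C hC hCs =>
    cct_unique hB (hfin.subset (Set.union_subset hCs hC₀s)) hC hCs hC₀ hC₀s
  have hfam : {C | Cct M C ∧ C ⊆ insert e B} = {C₀} := by
    ext C
    simp only [Set.mem_setOf_eq, Set.mem_singleton_iff]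
    exact ⟨fun h => huniq C h.1 h.2, fun h => h ▸ ⟨hC₀, hC₀s⟩⟩
  have hfund : fundCct M B e = C₀ := by
    rw [fundCct, hfam, Set.sInter_singleton]
  rw [hfund]
  exact ⟨hC₀, hC₀s, hC₀.mem_of_subset_insert hB hC₀s, huniq⟩

lemma restrict_dep_iff' (hR : R ⊆ M.E) : (M ↾ R).Dep X ↔ M.Dep X ∧ X ⊆ R := by
  rw [Matroid.restrict_dep_iff, Matroid.dep_iff]
  exact ⟨fun ⟨h1, h2⟩ => ⟨⟨h1, h2.trans hR⟩, h2⟩, fun ⟨⟨h1, _⟩, h2⟩ => ⟨h1, h2⟩⟩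

lemma cct_restrict (hR : R ⊆ M.E) : Cct (M ↾ R) C ↔ Cct M C ∧ C ⊆ R := by
  constructor
  · intro h
    have hd := (restrict_dep_iff' hR).mp h.1
    refine ⟨⟨hd.1, fun D hD hDC => h.2 ((restrict_dep_iff' hR).mpr ⟨hD, hDC.trans hd.2⟩) hDC⟩, hd.2⟩
  · rintro ⟨h, hCR⟩
    exact ⟨(restrict_dep_iff' hR).mpr ⟨h.1, hCR⟩,
      fun D hD hDC => h.2 ((restrict_dep_iff' hR).mp hD).1 hDC⟩

lemma fundCct_restrict (hR : R ⊆ M.E) (hBR : B ⊆ R) (heR : e ∈ R) :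
    fundCct (M ↾ R) B e = fundCct M B e := by
  have : {C | Cct (M ↾ R) C ∧ C ⊆ insert e B} = {C | Cct M C ∧ C ⊆ insert e B} := by
    ext C
    simp only [Set.mem_setOf_eq, cct_restrict hR]
    exact ⟨fun h => ⟨h.1.1, h.2⟩,
      fun h => ⟨⟨h.1, h.2.trans (Set.insert_subset heR hBR)⟩, h.2⟩⟩
  rw [fundCct, fundCct, this]

lemma actExt_subset (M : Matroid α) [LinearOrder α] (B : Set α) : ActExt M B ⊆ M.E \ B :=
  fun _ h => h.1

lemma actInt_subset (M : Matroid α) [LinearOrder α] (B : Set α) : ActInt M B ⊆ B :=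
  fun _ h => h.1

lemma actExt_restrict [LinearOrder α] (hR : R ⊆ M.E) (hBR : B ⊆ R) :
    ActExt (M ↾ R) B = ActExt M B ∩ R := by
  ext z
  simp only [ActExt, Set.mem_setOf_eq, Matroid.restrict_ground_eq, Set.mem_inter_iff,
    Set.mem_diff]
  constructor
  · rintro ⟨⟨hzR, hzB⟩, hl⟩
    rw [fundCct_restrict hR hBR hzR] at hl
    exact ⟨⟨⟨hR hzR, hzB⟩, hl⟩, hzR⟩
  · rintro ⟨⟨⟨_, hzB⟩, hl⟩, hzR⟩
    rw [← fundCct_restrict hR hBR hzR] at hl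
    exact ⟨⟨hzR, hzB⟩, hl⟩

lemma fundCocct_eq_dual (M : Matroid α) (B : Set α) (b : α) :
    fundCocct M B b = fundCct M✶ (M.E \ B) b := rfl

lemma actInt_eq_dual [LinearOrder α] (hB : B ⊆ M.E) :
    ActInt M B = ActExt M✶ (M.E \ B) := by
  ext z
  simp only [ActInt, ActExt, Set.mem_setOf_eq, Matroid.dual_ground, Set.mem_diff,
    fundCocct_eq_dual]
  constructor
  · rintro ⟨hzB, hl⟩
    exact ⟨⟨hB hzB, fun h => h.2 hzB⟩, hl⟩
  · rintro ⟨⟨hzE, hz⟩, hl⟩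
    have hzB : z ∈ B := by
      by_contra h
      exact hz ⟨hzE, h⟩
    exact ⟨hzB, hl⟩

end Phase1
section Phase2

variable {α : Type*} {M : Matroid α} {B C D I J R A F X : Set α} {e g x y : α}

lemma base_del_iff (hgE : g ∈ M.E) (hcp : ¬ M✶.Dep {g}) :
    (del M {g}).IsBase B ↔ M.IsBase B ∧ g ∉ B := by
  rw [del, Matroid.isBase_restrict_iff Set.diff_subset]
  have hind : M✶.Indep {g} := Matroid.indep_of_not_dep hcp (by simpa)
  obtain ⟨B₀, hB₀, hdisj⟩ := (Matroid.dual_indep_iff_exists (by simpa)).mp hind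
  have hgB₀ : g ∉ B₀ := fun h => (Set.disjoint_left.mp hdisj rfl) h
  constructor
  · intro h
    refine ⟨h.indep.isBase_of_ground_subset_closure ?_, fun hgB => (h.subset hgB).2 rfl⟩
    have h1 : M.E \ {g} ⊆ M.closure B := by
      rw [h.closure_eq_closure]
      exact M.subset_closure _ Set.diff_subset
    have h2 : M.E ⊆ M.closure (M.E \ {g}) := by
      have h3 := M.closure_subset_closure (Set.subset_diff_singleton hB₀.subset_ground hgB₀)
      rw [hB₀.closure_eq] at h3
      exact h3
    exact h2.trans (Matroid.closure_subset_closure_of_subset_closure h1)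
  · rintro ⟨hB, hgB⟩
    rw [Matroid.isBasis_iff_indep_subset_closure]
    exact ⟨hB.indep, Set.subset_diff_singleton hB.subset_ground hgB,
      Set.diff_subset.trans (by rw [hB.closure_eq])⟩

lemma base_con_iff (hA : A ⊆ M.E) :
    (con M A).IsBase B ↔ ∃ B₀, M.IsBase B₀ ∧ M.IsBasis (B₀ ∩ A) A ∧ B = B₀ \ A := by
  have hAE : M.E \ A ⊆ M✶.E := by rw [Matroid.dual_ground]; exact Set.diff_subset
  have hbase : ∀ K, (del M✶ A).IsBase K ↔ M✶.IsBasis K (M.E \ A) := fun K => by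
    rw [del, Matroid.dual_ground, Matroid.isBase_restrict_iff hAE]
  rw [con, Matroid.dual_isBase_iff', del_ground, Matroid.dual_ground, hbase]
  constructor
  · rintro ⟨hK, hBsub⟩
    obtain ⟨Bs, hBs, hKBs⟩ := hK.indep.exists_isBase_superset
    have hKeq : (M.E \ A) \ B = Bs ∩ (M.E \ A) :=
      hK.eq_of_subset_indep (hBs.indep.inter_right _)
        (Set.subset_inter hKBs Set.diff_subset) Set.inter_subset_right
    have hBsE : Bs ⊆ M.E := by
      have := hBs.subset_ground
      rwa [Matroid.dual_ground] at this
    refine ⟨M.E \ Bs, hBs.compl_isBase_of_dual, ?_, ?_⟩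
    · rw [Matroid.IsBase.inter_isBasis_iff_compl_inter_isBasis_dual hBs.compl_isBase_of_dual hA]
      have hcompl : M.E \ (M.E \ Bs) = Bs := by
        rw [Set.diff_diff_cancel_left hBsE]
      rw [hcompl, ← hKeq]
      exact hK
    · ext z
      constructor
      · intro hz
        have hz' : z ∈ M.E \ A := hBsub hz
        have hzBs : z ∉ Bs := by
          intro hzBs
          have : z ∈ (M.E \ A) \ B := by rw [hKeq]; exact ⟨hzBs, hz'⟩
          exact this.2 hz
        exact ⟨⟨hz'.1, hzBs⟩, hz'.2⟩
      · rintro ⟨⟨hzE, hzBs⟩, hzA⟩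
        by_contra hzB
        have : z ∈ (M.E \ A) \ B := ⟨⟨hzE, hzA⟩, hzB⟩
        rw [hKeq] at this
        exact hzBs this.1
  · rintro ⟨B₀, hB₀, hbas, rfl⟩
    have hB₀E := hB₀.subset_ground
    constructor
    · have hset : (M.E \ A) \ (B₀ \ A) = (M.E \ B₀) ∩ (M.E \ A) := by
        ext z
        simp only [Set.mem_diff, Set.mem_inter_iff]
        tauto
      rw [hset]
      rw [Matroid.IsBase.inter_isBasis_iff_compl_inter_isBasis_dual hB₀ hA] at hbas
      exact hbas
    · exact fun z hz => ⟨hB₀E hz.1, hz.2⟩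

lemma con_indep_iff (hA : A ⊆ M.E) :
    (con M A).Indep I ↔ I ⊆ M.E \ A ∧ ∃ J, M.IsBasis J A ∧ M.Indep (I ∪ J) := by
  constructor
  · intro h
    obtain ⟨B, hB, hIB⟩ := h.exists_isBase_superset
    rw [base_con_iff hA] at hB
    obtain ⟨B₀, hB₀, hbas, rfl⟩ := hB
    refine ⟨hIB.trans (fun z hz => ⟨hB₀.subset_ground hz.1, hz.2⟩), B₀ ∩ A, hbas,
      hB₀.indep.subset (Set.union_subset (hIB.trans Set.diff_subset) Set.inter_subset_left)⟩
  · rintro ⟨hIsub, J, hJ, hIJ⟩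
    obtain ⟨B₀, hB₀, hsub⟩ := hIJ.exists_isBase_superset
    have hJeq : J = B₀ ∩ A := hJ.eq_of_subset_indep (hB₀.indep.inter_right _)
      (Set.subset_inter (Set.subset_union_right.trans hsub) hJ.subset) Set.inter_subset_right
    have hbase : (con M A).IsBase (B₀ \ A) :=
      (base_con_iff hA).mpr ⟨B₀, hB₀, hJeq ▸ hJ, rfl⟩
    exact hbase.indep.subset (fun z hz => ⟨hsub (Or.inl hz), (hIsub hz).2⟩)

lemma del_del (M : Matroid α) (A B : Set α) : del (del M A) B = del M (A ∪ B) := by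
  show (M ↾ (M.E \ A)) ↾ ((M.E \ A) \ B) = M ↾ (M.E \ (A ∪ B))
  rw [Set.diff_diff]
  exact Matroid.restrict_restrict_eq M (by rw [← Set.diff_diff]; exact Set.diff_subset)

lemma con_con (M : Matroid α) (A B : Set α) : con (con M A) B = con M (A ∪ B) := by
  show (del (con M A)✶ B)✶ = (del M✶ (A ∪ B))✶
  rw [con_dual, del_del]

lemma con_del_comm (hA : A ⊆ M.E) (hdisj : Disjoint A D) :
    con (del M D) A = del (con M A) D := by
  have hAD : A ⊆ (del M D).E := by
    rw [del_ground]; exact Set.subset_diff.mpr ⟨hA, hdisj⟩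
  have hADs : A ⊆ M.E \ D := by rw [del_ground] at hAD; exact hAD
  refine Matroid.ext_indep ?_ ?_
  · rw [con_ground, del_ground, del_ground, con_ground, Set.diff_diff_comm]
  · intro I hI
    have h1 : (con (del M D) A).Indep I ↔
        I ⊆ (M.E \ D) \ A ∧ ∃ J, M.IsBasis J A ∧ M.Indep (I ∪ J) := by
      rw [con_indep_iff hAD]
      constructor
      · rintro ⟨hIs, J, hJ, hIJ⟩
        rw [del, Matroid.isBasis_restrict_iff Set.diff_subset] at hJ
        rw [del, Matroid.restrict_indep_iff] at hIJ
        exact ⟨by simpa using hIs, J, hJ.1, hIJ.1⟩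
      · rintro ⟨hIs, J, hJ, hIJ⟩
        refine ⟨by simpa using hIs, J, ?_, ?_⟩
        · rw [del, Matroid.isBasis_restrict_iff Set.diff_subset]
          exact ⟨hJ, hADs⟩
        · rw [del, Matroid.restrict_indep_iff]
          exact ⟨hIJ, Set.union_subset (hIs.trans Set.diff_subset) (hJ.subset.trans hADs)⟩
    have h2 : (del (con M A) D).Indep I ↔
        I ⊆ (M.E \ D) \ A ∧ ∃ J, M.IsBasis J A ∧ M.Indep (I ∪ J) := by
      rw [del, Matroid.restrict_indep_iff, con_indep_iff hA, con_ground]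
      constructor
      · rintro ⟨⟨hIs, hJ⟩, hsub⟩
        exact ⟨fun z hz => ⟨⟨(hsub hz).1.1, (hsub hz).2⟩, (hsub hz).1.2⟩, hJ⟩
      · rintro ⟨hIs, hJ⟩
        exact ⟨⟨fun z hz => ⟨(hIs hz).1.1, (hIs hz).2⟩, hJ⟩,
          fun z hz => ⟨⟨(hIs hz).1.1, (hIs hz).2⟩, (hIs hz).1.2⟩⟩
    rw [h1, h2]

lemma restrict_con_eq (hgE : g ∈ M.E) (hA : A ⊆ M.E \ {g}) :
    (con M {g}) ↾ A = con (M ↾ insert g A) {g} := by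
  have hgA : g ∉ A := fun h => (hA h).2 rfl
  have hRE : insert g A ⊆ M.E := Set.insert_subset hgE (hA.trans Set.diff_subset)
  refine Matroid.ext_indep ?_ ?_
  · rw [Matroid.restrict_ground_eq, con_ground, Matroid.restrict_ground_eq,
      Set.insert_diff_self_of_notMem hgA]
  · intro I hI
    rw [Matroid.restrict_ground_eq] at hI
    rw [Matroid.restrict_indep_iff, con_indep_iff (by simpa using hgE),
      con_indep_iff (show {g} ⊆ (M ↾ insert g A).E by simp)]
    rw [Matroid.restrict_ground_eq, Set.insert_diff_self_of_notMem hgA]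
    constructor
    · rintro ⟨⟨hIs, J, hJ, hIJ⟩, hIA⟩
      refine ⟨hIA, J, ?_, ?_⟩
      · rw [Matroid.isBasis_restrict_iff hRE]
        exact ⟨hJ, Set.singleton_subset_iff.mpr (Set.mem_insert g A)⟩
      · rw [Matroid.restrict_indep_iff]
        exact ⟨hIJ, Set.union_subset (fun z hz => Set.mem_insert_of_mem _ (hIA hz))
          (hJ.subset.trans (Set.singleton_subset_iff.mpr (Set.mem_insert g A)))⟩
    · rintro ⟨hIA, J, hJ, hIJ⟩
      rw [Matroid.isBasis_restrict_iff hRE] at hJ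
      rw [Matroid.restrict_indep_iff] at hIJ
      exact ⟨⟨fun z hz => hA (hIA hz), J, hJ.1, hIJ.1⟩, hIA⟩

lemma cp_iff_forall_base (hg : g ∈ M.E) : M✶.Dep {g} ↔ ∀ B, M.IsBase B → g ∈ B := by
  constructor
  · intro h B hB
    by_contra hgB
    exact h.not_indep ((Matroid.dual_indep_iff_exists (by simpa)).mpr
      ⟨B, hB, Set.disjoint_left.mpr (fun z hz => by rwa [hz])⟩)
  · intro h
    refine Matroid.dep_of_not_indep ?_ (by simpa)
    intro hind
    obtain ⟨B, hB, hdisj⟩ := (Matroid.dual_indep_iff_exists (by simpa)).mp hind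
    exact (Set.disjoint_left.mp hdisj rfl) (h B hB)

lemma lp_cp_false (hlp : M.Dep {g}) (hcp : M✶.Dep {g}) : False := by
  obtain ⟨B, hB⟩ := M.exists_isBase
  have hg : g ∈ M.E := hlp.subset_ground rfl
  have hgB := (cp_iff_forall_base hg).mp hcp B hB
  exact hlp.not_indep (hB.indep.subset (by simpa))

lemma lp_mem_closure_empty (hlp : M.Dep {g}) : g ∈ M.closure ∅ :=
  ((M.empty_indep.insert_dep_iff).mp (by simpa using hlp)).1

lemma lp_con_iff (hA : A ⊆ M.E) (hg : g ∈ M.E \ A) :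
    (con M A).Dep {g} ↔ g ∈ M.closure A := by
  obtain ⟨J, hJ⟩ := M.exists_isBasis A hA
  rw [Matroid.dep_iff, con_ground]
  simp only [Set.singleton_subset_iff]
  rw [con_indep_iff hA]
  constructor
  · rintro ⟨hni, -⟩
    by_contra hncl
    refine hni ⟨by simpa using hg, J, hJ, ?_⟩
    rw [Set.singleton_union,
      hJ.indep.insert_indep_iff_of_notMem (fun h => hg.2 (hJ.subset h))]
    exact ⟨hg.1, fun h => hncl (by rwa [hJ.closure_eq_closure] at h)⟩
  · intro hcl
    refine ⟨fun h => ?_, hg⟩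
    obtain ⟨-, J', hJ', hind⟩ := h
    have hgJ' : g ∉ J' := fun h' => hg.2 (hJ'.subset h')
    rw [Set.singleton_union, hJ'.indep.insert_indep_iff_of_notMem hgJ'] at hind
    exact hind.2 (by rwa [hJ'.closure_eq_closure])

lemma cp_restrict_iff (hg : g ∈ M.E) (hA : A ⊆ M.E \ {g}) :
    (M ↾ insert g A)✶.Dep {g} ↔ g ∉ M.closure A := by
  have hgA : g ∉ A := fun h => (hA h).2 rfl
  have hRE : insert g A ⊆ M.E := Set.insert_subset hg (hA.trans Set.diff_subset)
  have hAE : A ⊆ M.E := hA.trans Set.diff_subset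
  rw [cp_iff_forall_base (M := M ↾ insert g A) (by simp)]
  constructor
  · intro h hcl
    obtain ⟨J, hJ⟩ := M.exists_isBasis A hAE
    have hbasis : M.IsBasis J (insert g A) := by
      rw [Matroid.isBasis_iff_indep_subset_closure]
      exact ⟨hJ.indep, hJ.subset.trans (Set.subset_insert _ _),
        Set.insert_subset (by rwa [hJ.closure_eq_closure]) hJ.subset_closure⟩
    have := h J hbasis.isBase_restrict
    exact hgA (hJ.subset this)
  · intro hncl B hB
    have hbasis : M.IsBasis B (insert g A) := by
      rwa [Matroid.isBase_restrict_iff hRE] at hB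
    by_contra hgB
    have hBA : B ⊆ A := by
      intro z hz
      rcases hbasis.subset hz with rfl | h
      · exact absurd hz hgB
      · exact h
    exact hncl (M.closure_subset_closure hBA (hbasis.subset_closure (Set.mem_insert g A)))

lemma lp_del_eq_con (hlp : M.Dep {g}) : del M {g} = con M {g} := by
  have hg : g ∈ M.E := hlp.subset_ground rfl
  have hJ : M.IsBasis ∅ {g} := by
    rw [Matroid.empty_isBasis_iff]
    exact Set.singleton_subset_iff.mpr (lp_mem_closure_empty hlp)
  refine Matroid.ext_indep (by rw [del_ground, con_ground]) ?_
  intro I hI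
  rw [del, Matroid.restrict_indep_iff, con_indep_iff (by simpa)]
  constructor
  · rintro ⟨hind, hsub⟩
    exact ⟨hsub, ∅, hJ, by simpa⟩
  · rintro ⟨hsub, J, hJ', hind⟩
    exact ⟨hind.subset Set.subset_union_left, hsub⟩

lemma cp_del_eq_con (hcp : M✶.Dep {g}) : del M {g} = con M {g} := by
  have h2 := congrArg Matroid.dual (lp_del_eq_con hcp)
  rw [del_dual, con_dual] at h2
  simp only [Matroid.dual_dual] at h2
  exact h2.symm

lemma lp_restrict_iff (hR : R ⊆ M.E) : (M ↾ R).Dep {g} ↔ M.Dep {g} ∧ g ∈ R := by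
  rw [restrict_dep_iff' hR]
  simp

lemma cp_con_iff (A : Set α) : (con M A)✶.Dep {g} ↔ M✶.Dep {g} ∧ g ∈ M.E \ A := by
  rw [con_dual, del]
  rw [lp_restrict_iff Set.diff_subset]
  simp

lemma cp_not_mem_closure (hcp : M✶.Dep {g}) (hX : X ⊆ M.E \ {g}) : g ∉ M.closure X := by
  intro hcl
  have hg : g ∈ M.E := by
    have := hcp.subset_ground rfl
    rwa [Matroid.dual_ground] at this
  obtain ⟨J, hJ⟩ := M.exists_isBasis (M.E \ {g}) Set.diff_subset
  have hgJ : g ∉ J := fun h => (hJ.subset h).2 rfl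
  have hspan : M.E ⊆ M.closure J := by
    intro z hz
    by_cases hzg : z = g
    · subst hzg
      rw [hJ.closure_eq_closure]
      exact M.closure_subset_closure hX hcl
    · exact hJ.subset_closure ⟨hz, hzg⟩
  exact hgJ ((cp_iff_forall_base hg).mp hcp J (hJ.indep.isBase_of_ground_subset_closure hspan))

lemma cp_restrict_of_cp (hcp : M✶.Dep {g}) (hg : g ∈ M.E) (hA : A ⊆ M.E \ {g}) :
    (M ↾ insert g A)✶.Dep {g} :=
  (cp_restrict_iff hg hA).mpr (cp_not_mem_closure hcp hA)

lemma lp_con_of_lp (hlp : M.Dep {g}) (hA : A ⊆ M.E) (hg : g ∈ M.E \ A) : (con M A).Dep {g} :=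
  (lp_con_iff hA hg).mpr
    (M.closure_subset_closure (Set.empty_subset A) (lp_mem_closure_empty hlp))

lemma basis_singleton_eq (hg : M.Indep {g}) (hJ : M.IsBasis J {g}) : J = {g} := by
  rcases Set.subset_singleton_iff_eq.mp hJ.subset with h | h
  · exfalso
    rw [h, Matroid.empty_isBasis_iff] at hJ
    have hdep : M.Dep (insert g ∅) :=
      M.empty_indep.insert_dep_iff.mpr ⟨hJ rfl, Set.notMem_empty g⟩
    rw [show insert g (∅ : Set α) = {g} by simp] at hdep
    exact hg.not_dep hdep
  · exact h

lemma base_con_singleton_iff (hg : g ∈ M.E) (hlp : ¬ M.Dep {g}) :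
    (con M {g}).IsBase B ↔ M.IsBase (insert g B) ∧ g ∉ B := by
  have hgi : M.Indep {g} := Matroid.indep_of_not_dep hlp (by simpa)
  rw [base_con_iff (by simpa)]
  constructor
  · rintro ⟨B₀, hB₀, hbas, rfl⟩
    have hJ := basis_singleton_eq hgi hbas
    have hgB₀ : g ∈ B₀ := by
      have : g ∈ B₀ ∩ {g} := by rw [hJ]; exact rfl
      exact this.1
    rw [Set.insert_diff_singleton, Set.insert_eq_of_mem hgB₀]
    exact ⟨hB₀, by simp⟩
  · rintro ⟨hB, hgB⟩
    refine ⟨insert g B, hB, ?_, (Set.insert_diff_self_of_notMem hgB).symm⟩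
    have heq : insert g B ∩ {g} = {g} := by
      ext z
      simp only [Set.mem_inter_iff, Set.mem_singleton_iff, Set.mem_insert_iff]
      constructor
      · exact fun h => h.2
      · rintro rfl
        exact ⟨Or.inl rfl, rfl⟩
    rw [heq]
    exact hgi.isBasis_self

end Phase2
section Phase3

variable {α : Type*} [LinearOrder α] {M : Matroid α} {B C D I J R A F X : Set α} {e g x y : α}

lemma mem_actExt_of_loop [M.Finite] (hB : M.IsBase B) (hlp : M.Dep {x}) : x ∈ ActExt M B := by
  have hxE : x ∈ M.E := hlp.subset_ground rfl
  have hxB : x ∉ B := fun h => hlp.not_indep (hB.indep.subset (by simpa))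
  have hcct : Cct M {x} := by
    refine ⟨hlp, fun D hD hDx => ?_⟩
    rcases Set.subset_singleton_iff_eq.mp hDx with h | h
    · exact absurd (h ▸ hD.nonempty) (by simp)
    · rw [h]
  have hdep : M.Dep (insert x B) := hB.insert_dep ⟨hxE, hxB⟩
  obtain ⟨hc, hsub, hmem, huniq⟩ :=
    fundCct_spec hB.indep hdep (M.ground_finite.subset hdep.subset_ground)
  have hfund : fundCct M B x = {x} :=
    (huniq {x} hcct (Set.singleton_subset_iff.mpr (Set.mem_insert x B))).symm
  refine ⟨⟨hxE, hxB⟩, ?_⟩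
  rw [hfund]
  exact ⟨rfl, fun z hz => le_of_eq (Set.mem_singleton_iff.mp hz).symm⟩

lemma mem_actInt_of_coloop [M.Finite] (hB : M.IsBase B) (hcp : M✶.Dep {x}) : x ∈ ActInt M B := by
  rw [actInt_eq_dual hB.subset_ground]
  exact mem_actExt_of_loop hB.compl_isBase_dual hcp

lemma g_mem_actExt_iff [M.Finite] (hmax : ∀ y ∈ M.E, y ≤ g) (hB : M.IsBase B)
    (hg : g ∈ M.E \ B) : g ∈ ActExt M B ↔ M.Dep {g} := by
  constructor
  · rintro ⟨-, hleast⟩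
    have hdep : M.Dep (insert g B) := hB.insert_dep hg
    obtain ⟨hc, hsub, hmem, huniq⟩ :=
      fundCct_spec hB.indep hdep (M.ground_finite.subset hdep.subset_ground)
    have hsingle : fundCct M B g = {g} :=
      Set.eq_singleton_iff_unique_mem.mpr
        ⟨hmem, fun z hz => le_antisymm (hmax z (hc.subset_ground hz)) (hleast.2 hz)⟩
    rw [hsingle] at hc
    exact hc.dep
  · exact fun h => mem_actExt_of_loop hB h

lemma con_actExt [M.Finite] (hmax : ∀ y ∈ M.E, y ≤ g) (hB : M.IsBase B) (hgB : g ∈ B) :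
    ActExt (con M {g}) (B \ {g}) = ActExt M B := by
  set N := con M {g} with hN
  have hgE : g ∈ M.E := hB.subset_ground hgB
  have hgl : ¬ M.Dep {g} := fun h => h.not_indep (hB.indep.subset (by simpa))
  have hgi : M.Indep {g} := hB.indep.subset (by simpa)
  have hgsub : ({g} : Set α) ⊆ M.E := by simpa
  have hJg : M.IsBasis {g} {g} := hgi.isBasis_self
  have hBN : N.IsBase (B \ {g}) := by
    rw [hN, base_con_singleton_iff hgE hgl]
    constructor
    · rwa [Set.insert_diff_singleton, Set.insert_eq_of_mem hgB]
    · simp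
  have hNE : N.E = M.E \ {g} := con_ground M {g}
  have hdom : N.E \ (B \ {g}) = M.E \ B := by
    rw [hNE]
    ext z
    simp only [Set.mem_diff, Set.mem_singleton_iff]
    constructor
    · rintro ⟨⟨hzE, hzg⟩, hz⟩
      exact ⟨hzE, fun hzB => hz ⟨hzB, hzg⟩⟩
    · rintro ⟨hzE, hzB⟩
      exact ⟨⟨hzE, fun h => hzB (h ▸ hgB)⟩, fun h => hzB h.1⟩
  have hNdep : ∀ D : Set α, D ⊆ M.E \ {g} → ¬ M.Indep (insert g D) → N.Dep D := by
    intro D hD hnd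
    rw [Matroid.dep_iff, hNE]
    refine ⟨fun hind => ?_, hD⟩
    rw [hN, con_indep_iff hgsub] at hind
    obtain ⟨-, J, hJ, hind⟩ := hind
    rw [basis_singleton_eq hgi hJ, Set.union_singleton] at hind
    exact hnd hind
  have hNdep' : ∀ D : Set α, N.Dep D → M.Dep (insert g D) := by
    intro D hD
    have hDE : D ⊆ M.E \ {g} := by rw [← hNE]; exact hD.subset_ground
    refine Matroid.dep_of_not_indep (fun hind => hD.not_indep ?_)
      (Set.insert_subset hgE (hDE.trans Set.diff_subset))
    rw [hN, con_indep_iff hgsub]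
    exact ⟨hDE, {g}, hJg, by rwa [Set.union_singleton]⟩
  ext x
  simp only [ActExt, Set.mem_setOf_eq, hdom]
  refine and_congr_right fun hx => ?_
  have hxg : x ≠ g := fun h => hx.2 (h ▸ hgB)
  have hdep : M.Dep (insert x B) := hB.insert_dep hx
  have hfin : (insert x B).Finite := M.ground_finite.subset hdep.subset_ground
  obtain ⟨hc, hsub, hmem, huniq⟩ := fundCct_spec hB.indep hdep hfin
  have hCg : fundCct M B x \ {g} ⊆ insert x (B \ {g}) := by
    rintro z ⟨hz, hzg⟩
    rcases hsub hz with rfl | hzB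
    · exact Set.mem_insert _ _
    · exact Set.mem_insert_of_mem _ ⟨hzB, hzg⟩
  have hcct : Cct N (fundCct M B x \ {g}) := by
    constructor
    · refine hNdep _ (fun z hz => ⟨hc.subset_ground hz.1, hz.2⟩) (fun hind => ?_)
      refine hc.dep.not_indep (hind.subset ?_)
      intro z hz
      by_cases hzg : z = g
      · subst hzg
        exact Set.mem_insert _ _
      · exact Set.mem_insert_of_mem _ ⟨hz, hzg⟩
    · intro D hD hDsub
      have hins : insert g D ⊆ insert x B := by
        intro z hz
        rcases hz with rfl | hz
        · exact Set.mem_insert_of_mem _ hgB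
        · exact (hDsub hz).1 |> hsub |> fun h => h
      obtain ⟨C', hC', hC's⟩ := exists_cct_of_dep (hNdep' D hD) (hfin.subset hins)
      have hCeq := huniq C' hC' (hC's.trans hins)
      intro z hz
      have hzC' : z ∈ C' := by rw [hCeq]; exact hz.1
      rcases hC's hzC' with rfl | hzD
      · exact absurd rfl hz.2
      · exact hzD
  have hdepN : N.Dep (insert x (B \ {g})) := hBN.insert_dep (by rw [hdom]; exact hx)
  obtain ⟨-, -, -, huniqN⟩ := fundCct_spec hBN.indep hdepN
    (hfin.subset (Set.insert_subset_insert Set.diff_subset))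
  have hfund : fundCct N (B \ {g}) x = fundCct M B x \ {g} :=
    (huniqN _ hcct hCg).symm
  rw [hfund]
  constructor
  · rintro ⟨-, hlb⟩
    refine ⟨hmem, fun z hz => ?_⟩
    by_cases hzg : z = g
    · subst hzg
      exact hmax x hx.1
    · exact hlb ⟨hz, hzg⟩
  · rintro ⟨-, hlb⟩
    exact ⟨⟨hmem, hxg⟩, fun z hz => hlb hz.1⟩

lemma del_acts [M.Finite] (hmax : ∀ y ∈ M.E, y ≤ g) (hgE : g ∈ M.E) (hB : M.IsBase B)
    (hgB : g ∉ B) :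
    ActInt (del M {g}) B = ActInt M B ∧ ActExt (del M {g}) B = ActExt M B \ {g} := by
  constructor
  · have e1 : ActInt (del M {g}) B = ActExt (con M✶ {g}) ((M.E \ B) \ {g}) := by
      rw [actInt_eq_dual (M := del M {g})
        (by rw [del_ground]
            exact Set.subset_diff.mpr ⟨hB.subset_ground, Set.disjoint_singleton_right.mpr hgB⟩),
        del_dual, del_ground, Set.diff_diff_comm]
    rw [e1, con_actExt (M := M✶) (by simpa using hmax) hB.compl_isBase_dual ⟨hgE, hgB⟩,
      ← actInt_eq_dual hB.subset_ground]
  · rw [del, actExt_restrict Set.diff_subset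
      (Set.subset_diff.mpr ⟨hB.subset_ground, Set.disjoint_singleton_right.mpr hgB⟩)]
    ext z
    simp only [Set.mem_inter_iff, Set.mem_diff, Set.mem_singleton_iff]
    exact ⟨fun ⟨h1, h2⟩ => ⟨h1, h2.2⟩, fun ⟨h1, h2⟩ => ⟨h1, (actExt_subset M B h1).1, h2⟩⟩

lemma con_acts [M.Finite] (hmax : ∀ y ∈ M.E, y ≤ g) (hB : M.IsBase B) (hgB : g ∈ B) :
    ActExt (con M {g}) (B \ {g}) = ActExt M B ∧
      ActInt (con M {g}) (B \ {g}) = ActInt M B \ {g} := by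
  refine ⟨con_actExt hmax hB hgB, ?_⟩
  have hgE : g ∈ M.E := hB.subset_ground hgB
  have e0 : (M.E \ {g}) \ (B \ {g}) = M.E \ B := by
    ext z
    simp only [Set.mem_diff, Set.mem_singleton_iff]
    constructor
    · rintro ⟨⟨hzE, hzg⟩, hz⟩
      exact ⟨hzE, fun hzB => hz ⟨hzB, hzg⟩⟩
    · rintro ⟨hzE, hzB⟩
      exact ⟨⟨hzE, fun h => hzB (h ▸ hgB)⟩, fun h => hzB h.1⟩
  have e1 : ActInt (con M {g}) (B \ {g}) = ActExt (del M✶ {g}) (M.E \ B) := by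
    rw [actInt_eq_dual (M := con M {g})
      (by rw [con_ground]; exact Set.diff_subset_diff_left hB.subset_ground),
      con_dual, con_ground, e0]
  have hsub : M.E \ B ⊆ M✶.E \ {g} := by
    rw [Matroid.dual_ground]
    exact fun z hz => ⟨hz.1, fun h => hz.2 (h ▸ hgB)⟩
  rw [e1, del, actExt_restrict Set.diff_subset hsub, ← actInt_eq_dual hB.subset_ground]
  ext z
  simp only [Set.mem_inter_iff, Set.mem_diff, Set.mem_singleton_iff, Matroid.dual_ground]
  constructor
  · rintro ⟨h1, h2⟩
    exact ⟨h1, h2.2⟩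
  · rintro ⟨h1, h2⟩
    exact ⟨h1, hB.subset_ground (actInt_subset M B h1), h2⟩

lemma g_mem_actInt_iff [M.Finite] (hmax : ∀ y ∈ M.E, y ≤ g) (hB : M.IsBase B) (hgB : g ∈ B) :
    g ∈ ActInt M B ↔ M✶.Dep {g} := by
  rw [actInt_eq_dual hB.subset_ground]
  exact g_mem_actExt_iff (M := M✶) (by simpa using hmax) hB.compl_isBase_dual
    ⟨hB.subset_ground hgB, fun h => h.2 hgB⟩

end Phase3
section Phase4

variable {α : Type*} [LinearOrder α] {M : Matroid α} {B : Set α} {g : α} {i e : ℕ}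

/-- The set of bases with given internal and external activity. -/
def Nset (M : Matroid α) (i e : ℕ) : Set (Set α) :=
  {B | M.IsBase B ∧ (ActInt M B).ncard = i ∧ (ActExt M B).ncard = e}

/-- The number of bases with given internal and external activity. -/
noncomputable def Ncnt (M : Matroid α) (i e : ℕ) : ℕ := (Nset M i e).ncard

lemma actExt_finite (M : Matroid α) [M.Finite] (B : Set α) : (ActExt M B).Finite :=
  M.ground_finite.subset ((actExt_subset M B).trans Set.diff_subset)

lemma actInt_finite [M.Finite] (hB : B ⊆ M.E) : (ActInt M B).Finite :=
  M.ground_finite.subset ((actInt_subset M B).trans hB)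

lemma nset_finite (M : Matroid α) [M.Finite] (i e : ℕ) : (Nset M i e).Finite :=
  M.ground_finite.finite_subsets.subset (fun _ hB => hB.1.subset_ground)

lemma nset_empty_of_loop [M.Finite] (hlp : M.Dep {g}) (i : ℕ) : Nset M i 0 = ∅ := by
  ext B
  simp only [Nset, Set.mem_setOf_eq, Set.mem_empty_iff_false, iff_false, not_and]
  intro hB hint hext
  have hmem := mem_actExt_of_loop hB hlp
  rw [Set.ncard_eq_zero (actExt_finite M B)] at hext
  rw [hext] at hmem
  exact hmem

lemma nset_empty_of_coloop [M.Finite] (hcp : M✶.Dep {g}) (e : ℕ) : Nset M 0 e = ∅ := by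
  ext B
  simp only [Nset, Set.mem_setOf_eq, Set.mem_empty_iff_false, iff_false, not_and]
  intro hB hint
  have hmem := mem_actInt_of_coloop hB hcp
  rw [Set.ncard_eq_zero (actInt_finite hB.subset_ground)] at hint
  rw [hint] at hmem
  exact hmem.elim

lemma nset_del_of_loop [M.Finite] (hmax : ∀ y ∈ M.E, y ≤ g) (hlp : M.Dep {g}) (i e : ℕ) :
    Nset (del M {g}) i e = Nset M i (e + 1) := by
  have hgE : g ∈ M.E := hlp.subset_ground rfl
  have hcp : ¬ M✶.Dep {g} := fun h => lp_cp_false hlp h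
  ext B
  simp only [Nset, Set.mem_setOf_eq]
  constructor
  · rintro ⟨hB, hint, hext⟩
    rw [base_del_iff hgE hcp] at hB
    obtain ⟨hBbase, hgB⟩ := hB
    obtain ⟨hInt, hExt⟩ := del_acts hmax hgE hBbase hgB
    refine ⟨hBbase, by rwa [hInt] at hint, ?_⟩
    have hgmem : g ∈ ActExt M B := mem_actExt_of_loop hBbase hlp
    have h1 := Set.ncard_diff_singleton_add_one hgmem (actExt_finite M B)
    rw [hExt] at hext
    omega
  · rintro ⟨hB, hint, hext⟩
    have hgB : g ∉ B := fun h => hlp.not_indep (hB.indep.subset (by simpa))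
    obtain ⟨hInt, hExt⟩ := del_acts hmax hgE hB hgB
    refine ⟨(base_del_iff hgE hcp).mpr ⟨hB, hgB⟩, by rwa [hInt], ?_⟩
    have hgmem := mem_actExt_of_loop hB hlp
    have h1 := Set.ncard_diff_singleton_add_one hgmem (actExt_finite M B)
    rw [hExt]
    omega

lemma ncnt_con_of_coloop [M.Finite] (hmax : ∀ y ∈ M.E, y ≤ g) (hcp : M✶.Dep {g}) (i e : ℕ) :
    Ncnt (con M {g}) i e = Ncnt M (i + 1) e := by
  have hgE : g ∈ M.E := by
    have := hcp.subset_ground rfl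
    rwa [Matroid.dual_ground] at this
  have hlp : ¬ M.Dep {g} := fun h => lp_cp_false h hcp
  have himg : Nset (con M {g}) i e = (fun B => B \ {g}) '' Nset M (i + 1) e := by
    ext B'
    simp only [Nset, Set.mem_setOf_eq, Set.mem_image]
    constructor
    · rintro ⟨hB', hint, hext⟩
      rw [base_con_singleton_iff hgE hlp] at hB'
      obtain ⟨hBbase, hgB'⟩ := hB'
      have hBg : insert g B' \ {g} = B' := Set.insert_diff_self_of_notMem hgB'
      obtain ⟨hExt, hInt⟩ := con_acts hmax hBbase (Set.mem_insert g B')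
      rw [hBg] at hExt hInt
      refine ⟨insert g B', ⟨hBbase, ?_, by rwa [← hExt]⟩, hBg⟩
      have hgmem : g ∈ ActInt M (insert g B') := mem_actInt_of_coloop hBbase hcp
      have h1 := Set.ncard_diff_singleton_add_one hgmem (actInt_finite hBbase.subset_ground)
      rw [hInt] at hint
      omega
    · rintro ⟨B, ⟨hB, hint, hext⟩, rfl⟩
      have hgB : g ∈ B := (cp_iff_forall_base hgE).mp hcp B hB
      obtain ⟨hExt, hInt⟩ := con_acts hmax hB hgB
      refine ⟨?_, ?_, by rwa [hExt]⟩
      · rw [base_con_singleton_iff hgE hlp]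
        exact ⟨by rwa [Set.insert_diff_singleton, Set.insert_eq_of_mem hgB], by simp⟩
      · rw [hInt]
        have hgmem := mem_actInt_of_coloop hB hcp
        have h1 := Set.ncard_diff_singleton_add_one hgmem (actInt_finite hB.subset_ground)
        omega
  rw [Ncnt, Ncnt, himg, Set.ncard_image_of_injOn ?inj]
  case inj =>
    intro B1 h1 B2 h2 heq
    have hg1 : g ∈ B1 := (cp_iff_forall_base hgE).mp hcp B1 h1.1
    have hg2 : g ∈ B2 := (cp_iff_forall_base hgE).mp hcp B2 h2.1
    calc B1 = insert g (B1 \ {g}) := by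
              rw [Set.insert_diff_singleton, Set.insert_eq_of_mem hg1]
    _ = insert g (B2 \ {g}) := by simp only at heq; rw [heq]
    _ = B2 := by rw [Set.insert_diff_singleton, Set.insert_eq_of_mem hg2]

lemma ncnt_neither [M.Finite] (hmax : ∀ y ∈ M.E, y ≤ g) (hgE : g ∈ M.E)
    (hlp : ¬ M.Dep {g}) (hcp : ¬ M✶.Dep {g}) (i e : ℕ) :
    Ncnt M i e = Ncnt (del M {g}) i e + Ncnt (con M {g}) i e := by
  have h1 : Nset (del M {g}) i e = {B ∈ Nset M i e | g ∉ B} := by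
    ext B
    simp only [Nset, Set.mem_setOf_eq, Set.mem_sep_iff]
    constructor
    · rintro ⟨hB, hint, hext⟩
      rw [base_del_iff hgE hcp] at hB
      obtain ⟨hInt, hExt⟩ := del_acts hmax hgE hB.1 hB.2
      have hgne : g ∉ ActExt M B := fun h =>
        hlp ((g_mem_actExt_iff hmax hB.1 ⟨hgE, hB.2⟩).mp h)
      rw [hExt, Set.diff_singleton_eq_self hgne] at hext
      exact ⟨⟨hB.1, by rwa [hInt] at hint, hext⟩, hB.2⟩
    · rintro ⟨⟨hB, hint, hext⟩, hgB⟩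
      obtain ⟨hInt, hExt⟩ := del_acts hmax hgE hB hgB
      have hgne : g ∉ ActExt M B := fun h =>
        hlp ((g_mem_actExt_iff hmax hB ⟨hgE, hgB⟩).mp h)
      refine ⟨(base_del_iff hgE hcp).mpr ⟨hB, hgB⟩, by rwa [hInt], ?_⟩
      rw [hExt, Set.diff_singleton_eq_self hgne]
      exact hext
  have h2 : Nset (con M {g}) i e = (fun B => B \ {g}) '' {B ∈ Nset M i e | g ∈ B} := by
    ext B'
    simp only [Nset, Set.mem_setOf_eq, Set.mem_image, Set.mem_sep_iff]
    constructor
    · rintro ⟨hB', hint, hext⟩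
      rw [base_con_singleton_iff hgE hlp] at hB'
      obtain ⟨hBbase, hgB'⟩ := hB'
      have hBg : insert g B' \ {g} = B' := Set.insert_diff_self_of_notMem hgB'
      obtain ⟨hExt, hInt⟩ := con_acts hmax hBbase (Set.mem_insert g B')
      rw [hBg] at hExt hInt
      have hgne : g ∉ ActInt M (insert g B') := fun h =>
        hcp ((g_mem_actInt_iff hmax hBbase (Set.mem_insert g B')).mp h)
      rw [Set.diff_singleton_eq_self hgne] at hInt
      exact ⟨insert g B', ⟨⟨hBbase, by rwa [← hInt], by rwa [← hExt]⟩,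
        Set.mem_insert g B'⟩, hBg⟩
    · rintro ⟨B, ⟨⟨hB, hint, hext⟩, hgB⟩, rfl⟩
      obtain ⟨hExt, hInt⟩ := con_acts hmax hB hgB
      have hgne : g ∉ ActInt M B := fun h =>
        hcp ((g_mem_actInt_iff hmax hB hgB).mp h)
      rw [Set.diff_singleton_eq_self hgne] at hInt
      refine ⟨?_, by rwa [hInt], by rwa [hExt]⟩
      rw [base_con_singleton_iff hgE hlp]
      exact ⟨by rwa [Set.insert_diff_singleton, Set.insert_eq_of_mem hgB], by simp⟩
  have hsplit : Nset M i e = {B ∈ Nset M i e | g ∉ B} ∪ {B ∈ Nset M i e | g ∈ B} := by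
    ext B
    simp only [Set.mem_union, Set.mem_sep_iff]
    tauto
  have hdisj : Disjoint {B ∈ Nset M i e | g ∉ B} {B ∈ Nset M i e | g ∈ B} :=
    Set.disjoint_left.mpr (fun B h1 h2 => h1.2 h2.2)
  have hfin := nset_finite M i e
  rw [Ncnt, Ncnt, Ncnt, hsplit,
    Set.ncard_union_eq hdisj (hfin.subset (Set.sep_subset _ _)) (hfin.subset (Set.sep_subset _ _)),
    h1, h2, Set.ncard_image_of_injOn ?inj]
  case inj =>
    intro B1 h1' B2 h2' heq
    simp only at heq
    calc B1 = insert g (B1 \ {g}) := by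
              rw [Set.insert_diff_singleton, Set.insert_eq_of_mem h1'.2]
    _ = insert g (B2 \ {g}) := by rw [heq]
    _ = B2 := by rw [Set.insert_diff_singleton, Set.insert_eq_of_mem h2'.2]

end Phase4
section Phase5

variable {α : Type*} [LinearOrder α] {M : Matroid α} {A B E' : Set α} {g : α} {i e : ℕ}

lemma sum_split (f : Set α → ℕ) {E' : Set α} (hE : E'.Finite) (hg : g ∈ E') :
    ∑ᶠ A ∈ {A : Set α | A ⊆ E'}, f A
      = ∑ᶠ A ∈ {A : Set α | A ⊆ E' \ {g}}, (f A + f (insert g A)) := by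
  have hfin1 : {A : Set α | A ⊆ E' \ {g}}.Finite := Set.Finite.finite_subsets (hE.diff)
  have hfin2 : ((fun A => insert g A) '' {A : Set α | A ⊆ E' \ {g}}).Finite := hfin1.image _
  have hunion : {A : Set α | A ⊆ E'} =
      {A : Set α | A ⊆ E' \ {g}} ∪ (fun A => insert g A) '' {A : Set α | A ⊆ E' \ {g}} := by
    ext A
    simp only [Set.mem_setOf_eq, Set.mem_union, Set.mem_image]
    constructor
    · intro hA
      by_cases hgA : g ∈ A
      · right
        refine ⟨A \ {g}, fun z hz => ⟨hA hz.1, hz.2⟩, ?_⟩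
        rw [Set.insert_diff_singleton, Set.insert_eq_of_mem hgA]
      · left
        exact fun z hz => ⟨hA hz, fun h => hgA (h ▸ hz)⟩
    · intro h
      rcases h with h | ⟨A', hA', rfl⟩
      · exact h.trans Set.diff_subset
      · exact Set.insert_subset hg (hA'.trans Set.diff_subset)
  have hdisj : Disjoint {A : Set α | A ⊆ E' \ {g}}
      ((fun A => insert g A) '' {A : Set α | A ⊆ E' \ {g}}) := by
    rw [Set.disjoint_left]
    rintro A hA ⟨A', hA', rfl⟩
    exact (hA (Set.mem_insert g A')).2 rfl
  have hinj : Set.InjOn (fun A => insert g A) {A : Set α | A ⊆ E' \ {g}} := by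
    intro A1 h1 A2 h2 heq
    simp only at heq
    have hg1 : g ∉ A1 := fun h => (h1 h).2 rfl
    have hg2 : g ∉ A2 := fun h => (h2 h).2 rfl
    ext z
    constructor
    · intro hz
      have hz2 : z ∈ insert g A2 := heq ▸ Set.mem_insert_of_mem g hz
      rcases hz2 with rfl | h
      · exact absurd hz hg1
      · exact h
    · intro hz
      have hz2 : z ∈ insert g A1 := heq ▸ Set.mem_insert_of_mem g hz
      rcases hz2 with rfl | h
      · exact absurd hz hg2
      · exact h
  rw [hunion, finsum_mem_union hdisj hfin1 hfin2, finsum_mem_image hinj,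
    ← finsum_mem_add_distrib hfin1]

lemma con_empty (M : Matroid α) : con M ∅ = M := by
  rw [con, del, Set.diff_empty, Matroid.restrict_ground_eq_self, Matroid.dual_dual]

lemma ncnt_ground_empty [M.Finite] (hE : M.E = ∅) (i e : ℕ) :
    Ncnt M i e = if i = 0 ∧ e = 0 then 1 else 0 := by
  have hbase : ∀ B : Set α, M.IsBase B ↔ B = ∅ := by
    intro B
    constructor
    · intro h
      exact Set.subset_empty_iff.mp (hE ▸ h.subset_ground)
    · rintro rfl
      obtain ⟨B₀, hB₀⟩ := M.exists_isBase
      have hB0 : B₀ = ∅ := Set.subset_empty_iff.mp (hE ▸ hB₀.subset_ground)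
      rwa [hB0] at hB₀
  have hint : ActInt M ∅ = ∅ := Set.subset_empty_iff.mp (actInt_subset M ∅)
  have hext : ActExt M ∅ = ∅ := by
    have h := (actExt_subset M ∅).trans Set.diff_subset
    rw [hE] at h
    exact Set.subset_empty_iff.mp h
  have hnset : Nset M i e = if i = 0 ∧ e = 0 then {(∅ : Set α)} else ∅ := by
    ext B
    simp only [Nset, Set.mem_setOf_eq, hbase]
    constructor
    · rintro ⟨rfl, hi, he⟩
      rw [hint, Set.ncard_empty] at hi
      rw [hext, Set.ncard_empty] at he
      rw [if_pos ⟨hi.symm, he.symm⟩]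
      rfl
    · intro hB
      by_cases h : i = 0 ∧ e = 0
      · rw [if_pos h] at hB
        obtain ⟨rfl, rfl⟩ := h
        exact ⟨hB, by rw [hB, hint, Set.ncard_empty], by rw [hB, hext, Set.ncard_empty]⟩
      · rw [if_neg h] at hB
        exact absurd hB (Set.notMem_empty B)
  rw [Ncnt, hnset]
  by_cases h : i = 0 ∧ e = 0
  · rw [if_pos h, if_pos h, Set.ncard_singleton]
  · rw [if_neg h, if_neg h, Set.ncard_empty]

lemma main_empty [M.Finite] (hE : M.E = ∅) (i e : ℕ) :
    Ncnt M i e = ∑ᶠ A ∈ {A : Set α | A ⊆ M.E}, Ncnt (con M A) i 0 * Ncnt (M ↾ A) 0 e := by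
  have hset : {A : Set α | A ⊆ M.E} = {(∅ : Set α)} := by
    rw [hE]
    ext A
    simp [Set.subset_empty_iff]
  rw [hset, finsum_mem_singleton, con_empty,
    show M ↾ (∅ : Set α) = M by rw [← hE, Matroid.restrict_ground_eq_self],
    ncnt_ground_empty hE i e, ncnt_ground_empty hE i 0, ncnt_ground_empty hE 0 e]
  by_cases hi : i = 0 <;> by_cases he : e = 0 <;> simp [hi, he]

theorem main_conv : ∀ (n : ℕ) (M : Matroid α) [M.Finite], M.E.ncard ≤ n → ∀ i e : ℕ,
    Ncnt M i e = ∑ᶠ A ∈ {A : Set α | A ⊆ M.E}, Ncnt (con M A) i 0 * Ncnt (M ↾ A) 0 e := by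
  intro n
  induction n with
  | zero =>
    intro M hMfin hcard i e
    exact main_empty ((Set.ncard_eq_zero M.ground_finite).mp (Nat.le_zero.mp hcard)) i e
  | succ n ih =>
    intro M hMfin hcard i e
    by_cases hE : M.E = ∅
    · exact main_empty hE i e
    have hne : M.E.Nonempty := Set.nonempty_iff_ne_empty.mpr hE
    obtain ⟨g, hgE, hmax'⟩ := Set.Finite.exists_maximalFor id M.E M.ground_finite hne
    have hmax : ∀ y ∈ M.E, y ≤ g := by
      intro y hy
      by_contra h
      push_neg at h
      exact absurd (hmax' hy (le_of_lt h)) (not_le.mpr h)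
    have hcard' : (M.E \ {g}).ncard ≤ n := by
      have h1 := Set.ncard_diff_singleton_add_one hgE M.ground_finite
      omega
    have hfin1 : {A : Set α | A ⊆ M.E \ {g}}.Finite :=
      Set.Finite.finite_subsets (M.ground_finite.diff)
    rw [sum_split (fun A => Ncnt (con M A) i 0 * Ncnt (M ↾ A) 0 e) M.ground_finite hgE]
    by_cases hlp : M.Dep {g}
    · -- g is a loop
      cases e with
      | zero =>
        have hL : Ncnt M i 0 = 0 := by rw [Ncnt, nset_empty_of_loop hlp, Set.ncard_empty]
        rw [hL]
        symm
        apply finsum_mem_of_eqOn_zero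
        intro A hA
        have hAE : A ⊆ M.E := hA.trans Set.diff_subset
        have hgA : g ∉ A := fun h => (hA h).2 rfl
        have hRE : insert g A ⊆ M.E := Set.insert_subset hgE hAE
        haveI : (M ↾ insert g A).Finite := Matroid.restrict_finite (M.ground_finite.subset hRE)
        have h1 : Ncnt (con M A) i 0 = 0 := by
          rw [Ncnt, nset_empty_of_loop (lp_con_of_lp hlp hAE ⟨hgE, hgA⟩), Set.ncard_empty]
        have h2 : Ncnt (M ↾ insert g A) 0 0 = 0 := by
          rw [Ncnt, nset_empty_of_loop ((lp_restrict_iff hRE).mpr ⟨hlp, Set.mem_insert g A⟩),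
            Set.ncard_empty]
        simp only [Pi.zero_apply, h1, h2, zero_mul, mul_zero, add_zero]
      | succ e' =>
        have hstep : Ncnt M i (e' + 1) = Ncnt (del M {g}) i e' := by
          rw [Ncnt, Ncnt, nset_del_of_loop hmax hlp]
        rw [hstep, ih (del M {g}) (by rw [del_ground]; exact hcard') i e', del_ground]
        apply finsum_mem_congr rfl
        intro A hA
        have hAE : A ⊆ M.E := hA.trans Set.diff_subset
        have hgA : g ∉ A := fun h => (hA h).2 rfl
        have hRE : insert g A ⊆ M.E := Set.insert_subset hgE hAE
        haveI : (M ↾ insert g A).Finite := Matroid.restrict_finite (M.ground_finite.subset hRE)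
        have hmaxQ : ∀ y ∈ (M ↾ insert g A).E, y ≤ g := by
          intro y hy
          rw [Matroid.restrict_ground_eq] at hy
          exact hmax y (hRE hy)
        have hlpQ : (M ↾ insert g A).Dep {g} :=
          (lp_restrict_iff hRE).mpr ⟨hlp, Set.mem_insert g A⟩
        have h1 : Ncnt (con M A) i 0 = 0 := by
          rw [Ncnt, nset_empty_of_loop (lp_con_of_lp hlp hAE ⟨hgE, hgA⟩), Set.ncard_empty]
        have h2 : con M (insert g A) = con (del M {g}) A := by
          rw [lp_del_eq_con hlp, con_con, Set.singleton_union]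
        have h3 : Ncnt (M ↾ insert g A) 0 (e' + 1) = Ncnt (del (M ↾ insert g A) {g}) 0 e' := by
          rw [Ncnt, Ncnt, nset_del_of_loop hmaxQ hlpQ]
        have h4 : del (M ↾ insert g A) {g} = M ↾ A := by
          show (M ↾ insert g A) ↾ ((M ↾ insert g A).E \ {g}) = M ↾ A
          rw [Matroid.restrict_ground_eq, Set.insert_diff_self_of_notMem hgA]
          exact Matroid.restrict_restrict_eq M (Set.subset_insert g A)
        have h5 : del M {g} ↾ A = M ↾ A := by
          show (M ↾ (M.E \ {g})) ↾ A = M ↾ A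
          exact Matroid.restrict_restrict_eq M hA
        rw [h1, h2, h3, h4, h5, zero_mul, zero_add]
    by_cases hcp : M✶.Dep {g}
    · -- g is a coloop
      cases i with
      | zero =>
        have hL : Ncnt M 0 e = 0 := by rw [Ncnt, nset_empty_of_coloop hcp, Set.ncard_empty]
        rw [hL]
        symm
        apply finsum_mem_of_eqOn_zero
        intro A hA
        have hAE : A ⊆ M.E := hA.trans Set.diff_subset
        have hgA : g ∉ A := fun h => (hA h).2 rfl
        haveI : (M ↾ insert g A).Finite :=
          Matroid.restrict_finite (M.ground_finite.subset (Set.insert_subset hgE hAE))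
        have h1 : Ncnt (con M A) 0 0 = 0 := by
          rw [Ncnt, nset_empty_of_coloop ((cp_con_iff A).mpr ⟨hcp, hgE, hgA⟩), Set.ncard_empty]
        have h2 : Ncnt (M ↾ insert g A) 0 e = 0 := by
          rw [Ncnt, nset_empty_of_coloop (cp_restrict_of_cp hcp hgE hA), Set.ncard_empty]
        simp only [Pi.zero_apply, h1, h2, zero_mul, mul_zero, add_zero]
      | succ i' =>
        have hstep : Ncnt M (i' + 1) e = Ncnt (con M {g}) i' e :=
          (ncnt_con_of_coloop hmax hcp i' e).symm
        rw [hstep, ih (con M {g}) (by rw [con_ground]; exact hcard') i' e, con_ground]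
        apply finsum_mem_congr rfl
        intro A hA
        have hAE : A ⊆ M.E := hA.trans Set.diff_subset
        have hgA : g ∉ A := fun h => (hA h).2 rfl
        haveI : (M ↾ insert g A).Finite :=
          Matroid.restrict_finite (M.ground_finite.subset (Set.insert_subset hgE hAE))
        have hmaxP : ∀ y ∈ (con M A).E, y ≤ g := by
          intro y hy
          rw [con_ground] at hy
          exact hmax y hy.1
        have hcpP : (con M A)✶.Dep {g} := (cp_con_iff A).mpr ⟨hcp, hgE, hgA⟩
        have h1 : Ncnt (con M A) (i' + 1) 0 = Ncnt (con (con M A) {g}) i' 0 :=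
          (ncnt_con_of_coloop hmaxP hcpP i' 0).symm
        have h2 : con (con M A) {g} = con (con M {g}) A := by
          rw [con_con, con_con, Set.union_singleton, Set.singleton_union]
        have h3 : Ncnt (M ↾ insert g A) 0 e = 0 := by
          rw [Ncnt, nset_empty_of_coloop (cp_restrict_of_cp hcp hgE hA), Set.ncard_empty]
        have h4 : con M {g} ↾ A = M ↾ A := by
          rw [← cp_del_eq_con hcp]
          show (M ↾ (M.E \ {g})) ↾ A = M ↾ A
          exact Matroid.restrict_restrict_eq M hA
        rw [h1, h2, h3, h4, mul_zero, add_zero]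
    · -- g is neither a loop nor a coloop
      have hIHdel := ih (del M {g}) (by rw [del_ground]; exact hcard') i e
      have hIHcon := ih (con M {g}) (by rw [con_ground]; exact hcard') i e
      rw [ncnt_neither hmax hgE hlp hcp i e, hIHdel, hIHcon, del_ground, con_ground,
        ← finsum_mem_add_distrib hfin1]
      apply finsum_mem_congr rfl
      intro A hA
      have hAE : A ⊆ M.E := hA.trans Set.diff_subset
      have hgA : g ∉ A := fun h => (hA h).2 rfl
      have hRE : insert g A ⊆ M.E := Set.insert_subset hgE hAE
      haveI : (M ↾ insert g A).Finite := Matroid.restrict_finite (M.ground_finite.subset hRE)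
      have hgP : g ∈ (con M A).E := by rw [con_ground]; exact ⟨hgE, hgA⟩
      have hmaxP : ∀ y ∈ (con M A).E, y ≤ g := by
        intro y hy
        rw [con_ground] at hy
        exact hmax y hy.1
      have hmaxQ : ∀ y ∈ (M ↾ insert g A).E, y ≤ g := by
        intro y hy
        rw [Matroid.restrict_ground_eq] at hy
        exact hmax y (hRE hy)
      have hgQ : g ∈ (M ↾ insert g A).E := by
        rw [Matroid.restrict_ground_eq]; exact Set.mem_insert g A
      have hcpP : ¬ (con M A)✶.Dep {g} := fun h => hcp ((cp_con_iff A).mp h).1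
      have hlpQ : ¬ (M ↾ insert g A).Dep {g} := fun h => hlp ((lp_restrict_iff hRE).mp h).1
      have r1 : con (del M {g}) A = del (con M A) {g} :=
        con_del_comm hAE (Set.disjoint_singleton_right.mpr hgA)
      have r2 : del M {g} ↾ A = M ↾ A := by
        show (M ↾ (M.E \ {g})) ↾ A = M ↾ A
        exact Matroid.restrict_restrict_eq M hA
      have r3 : con (con M {g}) A = con (con M A) {g} := by
        rw [con_con, con_con, Set.union_singleton, Set.singleton_union]
      have r4 : con M {g} ↾ A = con (M ↾ insert g A) {g} := restrict_con_eq hgE hA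
      have r5 : con M (insert g A) = con (con M A) {g} := by
        rw [con_con, Set.union_singleton]
      have r6 : del (M ↾ insert g A) {g} = M ↾ A := by
        show (M ↾ insert g A) ↾ ((M ↾ insert g A).E \ {g}) = M ↾ A
        rw [Matroid.restrict_ground_eq, Set.insert_diff_self_of_notMem hgA]
        exact Matroid.restrict_restrict_eq M (Set.subset_insert g A)
      rw [r1, r2, r3, r4, r5, ← r6]
      by_cases hcl : g ∈ M.closure A
      · have hlpP : (con M A).Dep {g} := (lp_con_iff hAE ⟨hgE, hgA⟩).mpr hcl
        have hcpQ : ¬ (M ↾ insert g A)✶.Dep {g} := fun h =>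
          ((cp_restrict_iff hgE hA).mp h) hcl
        have h1 : Ncnt (con M A) i 0 = 0 := by
          rw [Ncnt, nset_empty_of_loop hlpP, Set.ncard_empty]
        rw [lp_del_eq_con hlpP, ncnt_neither hmaxQ hgQ hlpQ hcpQ 0 e, h1]
        ring
      · have hcpQ : (M ↾ insert g A)✶.Dep {g} := (cp_restrict_iff hgE hA).mpr hcl
        have hlpP : ¬ (con M A).Dep {g} := fun h => hcl ((lp_con_iff hAE ⟨hgE, hgA⟩).mp h)
        have hQ0 : Ncnt (M ↾ insert g A) 0 e = 0 := by
          rw [Ncnt, nset_empty_of_coloop hcpQ, Set.ncard_empty]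
        rw [cp_del_eq_con hcpQ, ncnt_neither hmaxP hgP hlpP hcpP i 0, hQ0]
        ring

end Phase5
section Phase6

variable {α : Type*} [LinearOrder α] {M N : Matroid α} {F B : Set α} {x : α} {i e : ℕ}

lemma coloop_of_no_circuit [N.Finite] (hx : x ∈ N.E) (h : ∀ C, Cct N C → x ∉ C) :
    N✶.Dep {x} := by
  rw [cp_iff_forall_base hx]
  intro B hB
  by_contra hxB
  have hdep := hB.insert_dep ⟨hx, hxB⟩
  obtain ⟨C, hC, hCs⟩ := exists_cct_of_dep hdep (N.ground_finite.subset hdep.subset_ground)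
  exact h C hC (hC.mem_of_subset_insert hB.indep hCs)

lemma loop_con_of_no_cocct [M.Finite] (hF : F ⊆ M.E) (hx : x ∈ M.E \ F)
    (h : ∀ C, Cct M✶ C → C ⊆ M.E \ F → x ∉ C) : (con M F).Dep {x} := by
  have hxE : x ∈ (con M F).E := by rw [con_ground]; exact hx
  refine Matroid.dep_of_not_indep (fun hind => ?_) (by simpa using hxE)
  obtain ⟨B', hB', hxB'⟩ := hind.exists_isBase_superset
  have hdual : (con M F)✶.IsBase ((con M F).E \ B') := hB'.compl_isBase_dual
  have hxnot : x ∉ (con M F).E \ B' := fun hc => hc.2 (hxB' rfl)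
  have hdep := hdual.insert_dep ⟨by rwa [Matroid.dual_ground], hxnot⟩
  obtain ⟨C, hC, hCs⟩ :=
    exists_cct_of_dep hdep ((con M F)✶.ground_finite.subset hdep.subset_ground)
  have hxC : x ∈ C := hC.mem_of_subset_insert hdual.indep hCs
  have hCd : Cct M✶ C ∧ C ⊆ M.E \ F := by
    rw [← cct_restrict (M := M✶) (R := M.E \ F) (by rw [Matroid.dual_ground]; exact Set.diff_subset)]
    have heq : (con M F)✶ = M✶ ↾ (M.E \ F) := by
      rw [con_dual, del, Matroid.dual_ground]
    rwa [heq] at hC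
  exact h C hCd.1 hCd.2 hxC

lemma vanish [M.Finite] (hF : F ⊆ M.E) (hnc : ¬ IsCyclicFlat M F) (i e : ℕ) :
    Ncnt (con M F) i 0 * Ncnt (M ↾ F) 0 e = 0 := by
  haveI : (M ↾ F).Finite := Matroid.restrict_finite (M.ground_finite.subset hF)
  rw [IsCyclicFlat, not_and_or] at hnc
  rcases hnc with hnf | hnd
  · have hwit : ∃ x ∈ M.E \ F, ∀ C, Cct M✶ C → C ⊆ M.E \ F → x ∉ C := by
      by_contra h
      push_neg at h
      refine hnf ⟨hF, {C | Cct M✶ C ∧ C ⊆ M.E \ F}, fun C hC => hC.1, ?_⟩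
      ext z
      simp only [Set.mem_sUnion, Set.mem_setOf_eq]
      constructor
      · intro hz
        obtain ⟨C, hC1, hC2, hzC⟩ := h z hz
        exact ⟨C, ⟨hC1, hC2⟩, hzC⟩
      · rintro ⟨C, ⟨hC1, hC2⟩, hzC⟩
        exact hC2 hzC
    obtain ⟨x, hx, hno⟩ := hwit
    have hlp : (con M F).Dep {x} := loop_con_of_no_cocct hF hx hno
    have h0 : Ncnt (con M F) i 0 = 0 := by
      rw [Ncnt, nset_empty_of_loop hlp, Set.ncard_empty]
    rw [h0, zero_mul]
  · have hwit : ∃ x ∈ F, ∀ C, Cct M C → C ⊆ F → x ∉ C := by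
      by_contra h
      push_neg at h
      refine hnd ⟨{C | Cct M C ∧ C ⊆ F}, fun C hC => hC.1, ?_⟩
      ext z
      simp only [Set.mem_sUnion, Set.mem_setOf_eq]
      constructor
      · intro hz
        obtain ⟨C, hC1, hC2, hzC⟩ := h z hz
        exact ⟨C, ⟨hC1, hC2⟩, hzC⟩
      · rintro ⟨C, ⟨hC1, hC2⟩, hzC⟩
        exact hC2 hzC
    obtain ⟨x, hx, hno⟩ := hwit
    have hcp : (M ↾ F)✶.Dep {x} := by
      apply coloop_of_no_circuit (by rwa [Matroid.restrict_ground_eq])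
      intro C hC
      rw [cct_restrict hF] at hC
      exact hno C hC.1 hC.2
    have h0 : Ncnt (M ↾ F) 0 e = 0 := by
      rw [Ncnt, nset_empty_of_coloop hcp, Set.ncard_empty]
    rw [h0, mul_zero]

lemma sum_cyclic_flats [M.Finite] (i e : ℕ) :
    ∑ᶠ F ∈ {F : Set α | F ⊆ M.E}, Ncnt (con M F) i 0 * Ncnt (M ↾ F) 0 e
      = ∑ᶠ F ∈ {F : Set α | IsCyclicFlat M F}, Ncnt (con M F) i 0 * Ncnt (M ↾ F) 0 e := by
  have hfinS : {F : Set α | F ⊆ M.E}.Finite := Set.Finite.finite_subsets M.ground_finite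
  have hsubT : {F : Set α | IsCyclicFlat M F} ⊆ {F : Set α | F ⊆ M.E} := fun F hF => hF.1.1
  have hun : {F : Set α | F ⊆ M.E} =
      {F : Set α | IsCyclicFlat M F} ∪
        ({F : Set α | F ⊆ M.E} \ {F : Set α | IsCyclicFlat M F}) :=
    (Set.union_diff_cancel hsubT).symm
  have hdisj : Disjoint {F : Set α | IsCyclicFlat M F}
      ({F : Set α | F ⊆ M.E} \ {F : Set α | IsCyclicFlat M F}) :=
    Set.disjoint_left.mpr (fun F hF hF2 => hF2.2 hF)
  rw [hun, finsum_mem_union hdisj (hfinS.subset hsubT) (hfinS.diff)]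
  have hzero : ∑ᶠ F ∈ ({F : Set α | F ⊆ M.E} \ {F : Set α | IsCyclicFlat M F}),
      Ncnt (con M F) i 0 * Ncnt (M ↾ F) 0 e = 0 :=
    finsum_mem_of_eqOn_zero (fun F hF => vanish hF.1 hF.2 i e)
  rw [hzero, add_zero]

end Phase6


/-- Coefficientwise convolution formula : counting bases by activities via cyclic flats. -/
theorem stmt13 {α : Type*} [LinearOrder α] (M : Matroid α) [M.Finite] (i e : ℕ) :
    ({B : Set α | M.IsBase B ∧ (ActInt M B).ncard = i ∧ (ActExt M B).ncard = e}.ncard =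
      ∑ᶠ F ∈ {F : Set α | IsCyclicFlat M F},
        {B : Set α | (con M F).IsBase B ∧ (ActInt (con M F) B).ncard = i ∧
            (ActExt (con M F) B).ncard = 0}.ncard *
          {B : Set α | (M ↾ F).IsBase B ∧ (ActInt (M ↾ F) B).ncard = 0 ∧
            (ActExt (M ↾ F) B).ncard = e}.ncard) ∧
    ({B : Set α | M.IsBase B ∧ (ActInt M B).ncard = i ∧ (ActExt M B).ncard = e}.ncard =
      ∑ᶠ F ∈ {F : Set α | F ⊆ M.E},
        {B : Set α | (con M F).IsBase B ∧ (ActInt (con M F) B).ncard = i ∧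
            (ActExt (con M F) B).ncard = 0}.ncard *
          {B : Set α | (M ↾ F).IsBase B ∧ (ActInt (M ↾ F) B).ncard = 0 ∧
            (ActExt (M ↾ F) B).ncard = e}.ncard) ∧
    (∀ F ⊆ M.E, ¬ IsCyclicFlat M F →
      {B : Set α | (con M F).IsBase B ∧ (ActInt (con M F) B).ncard = i ∧
          (ActExt (con M F) B).ncard = 0}.ncard *
        {B : Set α | (M ↾ F).IsBase B ∧ (ActInt (M ↾ F) B).ncard = 0 ∧
          (ActExt (M ↾ F) B).ncard = e}.ncard = 0) := by
  have hmain : Ncnt M i e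
      = ∑ᶠ F ∈ {F : Set α | F ⊆ M.E}, Ncnt (con M F) i 0 * Ncnt (M ↾ F) 0 e :=
    main_conv M.E.ncard M le_rfl i e
  refine ⟨?_, ?_, ?_⟩
  · show Ncnt M i e
      = ∑ᶠ F ∈ {F : Set α | IsCyclicFlat M F}, Ncnt (con M F) i 0 * Ncnt (M ↾ F) 0 e
    rw [hmain, sum_cyclic_flats]
  · exact hmain
  · intro F hFE hnc
    show Ncnt (con M F) i 0 * Ncnt (M ↾ F) 0 e = 0
    exact vanish hFE hnc i e

end ActiveBij
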